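/- Let Γ ⊂ ℝⁿ be d-dimensional Ahlfors regular with d < n−1 and let m(E) = ∫_E dist(X,Γ)^{d+1−n} dX. Then there is C > 0 depending only on C₀, n, d such that C⁻¹ r^{d+1} ≤ m(B(x,r)) ≤ C r^{d+1} for all x ∈ Γ and r > 0. -/

import Mathlib

open MeasureTheory Metric Set
open scoped ENNReal

lemma exists_net {n : ℕ} {d C₀ : ℝ} (hd₀ : 0 ≤ d) (hC₀ : 0 < C₀)
    {Γ : Set (EuclideanSpace ℝ (Fin n))}
    (hAR : ∀ x ∈ Γ, ∀ r : ℝ, 0 < r →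
      ENNReal.ofReal (C₀⁻¹ * r ^ d) ≤ μH[d] (Γ ∩ ball x r) ∧
      μH[d] (Γ ∩ ball x r) ≤ ENNReal.ofReal (C₀ * r ^ d))
    {x : EuclideanSpace ℝ (Fin n)} (hx : x ∈ Γ) {R s : ℝ} (hR : 0 < R) (hs : 0 < s) :
    ∃ T : Finset (EuclideanSpace ℝ (Fin n)), (↑T : Set (EuclideanSpace ℝ (Fin n))) ⊆ Γ ∧
      (T.card : ℝ) * (C₀⁻¹ * (s / 2) ^ d) ≤ C₀ * (R + s) ^ d ∧
      Γ ∩ closedBall x R ⊆ ⋃ t ∈ T, ball t s := by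
  classical
  have ha : (0:ℝ) < C₀⁻¹ * (s / 2) ^ d := by positivity
  have hb : (0:ℝ) ≤ C₀ * (R + s) ^ d := by positivity
  set S : Set (Set (EuclideanSpace ℝ (Fin n))) := {T | T ⊆ Γ ∩ closedBall x R ∧ T.Pairwise fun a b => s ≤ dist a b}
    with hS
  obtain ⟨m, hmax⟩ := zorn_subset S (by
    intro c hc hchain
    refine ⟨⋃₀ c, ⟨sUnion_subset fun t ht => (hc ht).1, ?_⟩, fun t ht => subset_sUnion_of_mem ht⟩
    intro a ha b hb hab
    obtain ⟨ta, hta, hat⟩ := ha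
    obtain ⟨tb, htb, hbt⟩ := hb
    rcases hchain.total hta htb with h | h
    · exact (hc htb).2 (h hat) hbt hab
    · exact (hc hta).2 hat (h hbt) hab)
  have hmS : m ∈ S := hmax.prop
  -- counting bound for finite subsets of m
  have key : ∀ F : Finset (EuclideanSpace ℝ (Fin n)), (↑F : Set (EuclideanSpace ℝ (Fin n))) ⊆ m → (F.card : ℝ) * (C₀⁻¹ * (s / 2) ^ d) ≤ C₀ * (R + s) ^ d := by
    intro F hF
    have hFΓ : ∀ t ∈ F, t ∈ Γ ∩ closedBall x R := fun t ht => hmS.1 (hF ht)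
    set ν := (μH[d] : Measure (EuclideanSpace ℝ (Fin n))).restrict Γ with hν
    have hdisj : (↑F : Set (EuclideanSpace ℝ (Fin n))).PairwiseDisjoint fun t => ball t (s / 2) := by
      intro a ha' b hb' hab
      exact ball_disjoint_ball (by
        have := hmS.2 (hF ha') (hF hb') hab
        linarith)
    have hsum : (F.card : ℝ≥0∞) * ENNReal.ofReal (C₀⁻¹ * (s / 2) ^ d)
        ≤ ν (⋃ t ∈ F, ball t (s / 2)) := by
      rw [measure_biUnion_finset hdisj (fun t _ => measurableSet_ball)]
      calc (F.card : ℝ≥0∞) * ENNReal.ofReal (C₀⁻¹ * (s / 2) ^ d)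
          = ∑ _t ∈ F, ENNReal.ofReal (C₀⁻¹ * (s / 2) ^ d) := by
            simp [Finset.sum_const, nsmul_eq_mul]
        _ ≤ ∑ t ∈ F, ν (ball t (s / 2)) := by
            refine Finset.sum_le_sum fun t ht => ?_
            rw [hν, Measure.restrict_apply measurableSet_ball, inter_comm]
            exact (hAR t (hFΓ t ht).1 (s / 2) (by positivity)).1
    have hsub : (⋃ t ∈ F, ball t (s / 2)) ⊆ ball x (R + s) := by
      refine iUnion₂_subset fun t ht => ?_
      intro z hz
      have h1 : dist z t < s / 2 := mem_ball.1 hz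
      have h2 : dist t x ≤ R := mem_closedBall.1 (hFΓ t ht).2
      have : dist z x < R + s := by
        calc dist z x ≤ dist z t + dist t x := dist_triangle _ _ _
          _ < R + s := by linarith
      exact mem_ball.2 this
    have hupper : ν (ball x (R + s)) ≤ ENNReal.ofReal (C₀ * (R + s) ^ d) := by
      rw [hν, Measure.restrict_apply measurableSet_ball, inter_comm]
      exact (hAR x hx (R + s) (by positivity)).2
    have htot := hsum.trans ((measure_mono hsub).trans hupper)
    rw [show ((F.card : ℝ≥0∞)) = ENNReal.ofReal (F.card : ℝ) by simp,
      ← ENNReal.ofReal_mul (by positivity)] at htot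
    exact (ENNReal.ofReal_le_ofReal_iff hb).1 htot
  -- m is finite
  have hmfin : m.Finite := by
    by_contra hinf
    have hinf : m.Infinite := hinf
    set N : ℕ := ⌈C₀ * (R + s) ^ d / (C₀⁻¹ * (s / 2) ^ d)⌉₊ + 1 with hN
    obtain ⟨F, hFm, hcard⟩ := hinf.exists_subset_card_eq N
    have h1 := key F hFm
    have h2 : C₀ * (R + s) ^ d / (C₀⁻¹ * (s / 2) ^ d) < (N : ℝ) := by
      rw [hN]
      push_cast
      calc C₀ * (R + s) ^ d / (C₀⁻¹ * (s / 2) ^ d)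
          ≤ (⌈C₀ * (R + s) ^ d / (C₀⁻¹ * (s / 2) ^ d)⌉₊ : ℝ) := Nat.le_ceil _
        _ < _ := by linarith
    rw [div_lt_iff₀ ha] at h2
    rw [hcard] at h1
    linarith
  refine ⟨hmfin.toFinset, ?_, ?_, ?_⟩
  · intro t ht
    rw [Set.Finite.coe_toFinset] at ht
    exact (hmS.1 ht).1
  · exact key hmfin.toFinset (by rw [Set.Finite.coe_toFinset])
  · intro y hy
    by_contra hyn
    have h1 : ∀ t ∈ m, s ≤ dist y t := by
      intro t ht
      by_contra h
      exact hyn (mem_biUnion (hmfin.mem_toFinset.2 ht) (mem_ball.2 (lt_of_not_ge h)))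
    have hym : y ∉ m := by
      intro hym
      have := h1 y hym
      simp at this
      linarith
    have hins : insert y m ∈ S := by
      constructor
      · exact insert_subset hy hmS.1
      · refine Set.pairwise_insert.2 ⟨hmS.2, fun b hb _ => ⟨h1 b hb, ?_⟩⟩
        rw [dist_comm]
        exact h1 b hb
    have := hmax.2 hins (subset_insert y m)
    exact hym (this (mem_insert y m))

lemma nbhd_vol {n : ℕ} {d C₀ : ℝ} (hd₀ : 0 ≤ d) (hd : d < (n : ℝ) - 1) (hC₀ : 0 < C₀)
    {Γ : Set (EuclideanSpace ℝ (Fin n))}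
    (hAR : ∀ x ∈ Γ, ∀ r : ℝ, 0 < r →
      ENNReal.ofReal (C₀⁻¹ * r ^ d) ≤ μH[d] (Γ ∩ ball x r) ∧
      μH[d] (Γ ∩ ball x r) ≤ ENNReal.ofReal (C₀ * r ^ d))
    {x : EuclideanSpace ℝ (Fin n)} (hx : x ∈ Γ) {r s : ℝ}
    (hr : 0 < r) (hs : 0 < s) (hsr : s ≤ r) :
    volume {X ∈ ball x r | infDist X Γ ≤ s} ≤
      ENNReal.ofReal ((C₀ ^ 2 * 8 ^ d * 3 ^ n *
        (volume (ball (0 : EuclideanSpace ℝ (Fin n)) 1)).toReal) *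
        (r ^ d * s ^ ((n : ℝ) - d))) := by
  classical
  have hnpos : 0 < n := by
    by_contra h
    push_neg at h
    interval_cases n <;> simp_all <;> linarith
  haveI : Nontrivial (EuclideanSpace ℝ (Fin n)) := by
    apply Module.nontrivial_of_finrank_pos (R := ℝ)
    rw [finrank_euclideanSpace_fin]
    exact hnpos
  set b : ℝ := (volume (ball (0 : EuclideanSpace ℝ (Fin n)) 1)).toReal with hbdef
  have hbpos : 0 < b := by
    rw [hbdef]
    exact ENNReal.toReal_pos (measure_ball_pos volume _ one_pos).ne' measure_ball_lt_top.ne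
  obtain ⟨T, hTΓ, hTcard, hTcov⟩ := exists_net hd₀ hC₀ hAR hx (R := 3 * r) (s := s)
    (by linarith) hs
  -- covering of the neighborhood by balls of radius 3s
  have hcov : {X ∈ ball x r | infDist X Γ ≤ s} ⊆ ⋃ t ∈ T, ball t (3 * s) := by
    rintro X ⟨hX1, hX2⟩
    have hne : Γ.Nonempty := ⟨x, hx⟩
    have : infDist X Γ < 2 * s := by linarith
    obtain ⟨y, hyΓ, hXy⟩ := (infDist_lt_iff hne).1 this
    have hyB : y ∈ closedBall x (3 * r) := by
      have h1 : dist X x < r := mem_ball.1 hX1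
      have : dist y x ≤ dist y X + dist X x := dist_triangle _ _ _
      rw [dist_comm y X] at this
      exact mem_closedBall.2 (by linarith)
    obtain ⟨t, ht, hyt⟩ := mem_iUnion₂.1 (hTcov ⟨hyΓ, hyB⟩)
    refine mem_iUnion₂.2 ⟨t, ht, mem_ball.2 ?_⟩
    have h2 : dist y t < s := mem_ball.1 hyt
    calc dist X t ≤ dist X y + dist y t := dist_triangle _ _ _
      _ < 3 * s := by linarith
  -- cardinality bound in ℝ
  have hTcard' : (T.card : ℝ) ≤ C₀ ^ 2 * 8 ^ d * (r ^ d / s ^ d) := by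
    have ha : (0:ℝ) < C₀⁻¹ * (s / 2) ^ d := by positivity
    have h48 : C₀ * (3 * r + s) ^ d ≤ C₀ * (4 * r) ^ d := by
      have := Real.rpow_le_rpow (by linarith) (by linarith : 3 * r + s ≤ 4 * r) hd₀
      nlinarith [this]
    have h1 : (T.card : ℝ) * (C₀⁻¹ * (s / 2) ^ d) ≤ C₀ * (4 * r) ^ d := hTcard.trans h48
    have hsd : (0:ℝ) < s ^ d := Real.rpow_pos_of_pos hs d
    have hexp : C₀ * (4 * r) ^ d / (C₀⁻¹ * (s / 2) ^ d) = C₀ ^ 2 * 8 ^ d * (r ^ d / s ^ d) := by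
      rw [Real.mul_rpow (by norm_num) hr.le, Real.div_rpow hs.le (by norm_num)]
      have h2d : (0:ℝ) < (2:ℝ) ^ d := Real.rpow_pos_of_pos two_pos d
      have h4d : (0:ℝ) < (4:ℝ) ^ d := Real.rpow_pos_of_pos (by norm_num) d
      have h8 : (8:ℝ) ^ d = 4 ^ d * 2 ^ d := by
        rw [← Real.mul_rpow (by norm_num) (by norm_num)]
        norm_num
      field_simp
      rw [h8]
    rw [← hexp]
    rw [le_div_iff₀ ha]
    exact h1
  -- volume bound
  have hvol : volume {X ∈ ball x r | infDist X Γ ≤ s} ≤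
      (T.card : ℝ≥0∞) * ENNReal.ofReal ((3 * s) ^ n * b) := by
    calc volume {X ∈ ball x r | infDist X Γ ≤ s}
        ≤ volume (⋃ t ∈ T, ball t (3 * s)) := measure_mono hcov
      _ ≤ ∑ t ∈ T, volume (ball t (3 * s)) := measure_biUnion_finset_le T _
      _ = ∑ _t ∈ T, ENNReal.ofReal ((3 * s) ^ n * b) := by
          refine Finset.sum_congr rfl fun t _ => ?_
          rw [Measure.addHaar_ball volume t (by positivity : (0:ℝ) ≤ 3 * s),
            finrank_euclideanSpace_fin, ENNReal.ofReal_mul (by positivity), hbdef,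
            ENNReal.ofReal_toReal measure_ball_lt_top.ne]
      _ = (T.card : ℝ≥0∞) * ENNReal.ofReal ((3 * s) ^ n * b) := by
          simp [Finset.sum_const, nsmul_eq_mul]
  refine hvol.trans ?_
  rw [show ((T.card : ℝ≥0∞)) = ENNReal.ofReal (T.card : ℝ) by simp,
    ← ENNReal.ofReal_mul (by positivity)]
  apply ENNReal.ofReal_le_ofReal
  -- real algebra
  have hsd : (0:ℝ) < s ^ d := Real.rpow_pos_of_pos hs d
  have hsnd : s ^ ((n : ℝ) - d) = s ^ (n : ℕ) / s ^ d := by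
    rw [eq_div_iff hsd.ne', ← Real.rpow_natCast s n, ← Real.rpow_add hs]
    ring_nf
  have h3sn : (3 * s : ℝ) ^ n = 3 ^ n * s ^ n := by rw [mul_pow]
  calc (T.card : ℝ) * ((3 * s) ^ n * b)
      ≤ (C₀ ^ 2 * 8 ^ d * (r ^ d / s ^ d)) * ((3 * s) ^ n * b) := by
        apply mul_le_mul_of_nonneg_right hTcard' (by positivity)
    _ = (C₀ ^ 2 * 8 ^ d * 3 ^ n * b) * (r ^ d * (s ^ (n:ℕ) / s ^ d)) := by
        rw [h3sn]; ring
    _ = _ := by rw [hsnd]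

lemma m_upper {n : ℕ} {d C₀ : ℝ} (hd₀ : 0 ≤ d) (hd : d < (n : ℝ) - 1) (hC₀ : 0 < C₀)
    {Γ : Set (EuclideanSpace ℝ (Fin n))}
    (hAR : ∀ x ∈ Γ, ∀ r : ℝ, 0 < r →
      ENNReal.ofReal (C₀⁻¹ * r ^ d) ≤ μH[d] (Γ ∩ ball x r) ∧
      μH[d] (Γ ∩ ball x r) ≤ ENNReal.ofReal (C₀ * r ^ d))
    {x : EuclideanSpace ℝ (Fin n)} (hx : x ∈ Γ) {r : ℝ} (hr : 0 < r) :
    ∫⁻ X in ball x r, ENNReal.ofReal (infDist X Γ ^ (d + 1 - (n : ℝ))) ∂volume ≤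
      ENNReal.ofReal ((2 * (C₀ ^ 2 * 8 ^ d * 3 ^ n *
        (volume (ball (0 : EuclideanSpace ℝ (Fin n)) 1)).toReal * 2 ^ ((n : ℝ) - 1 - d))) *
        r ^ (d + 1)) := by
  classical
  set b : ℝ := (volume (ball (0 : EuclideanSpace ℝ (Fin n)) 1)).toReal with hbdef
  have hbnn : 0 ≤ b := ENNReal.toReal_nonneg
  set α : ℝ := d + 1 - (n : ℝ) with hαdef
  have hαneg : α < 0 := by rw [hαdef]; linarith
  set C₂ : ℝ := C₀ ^ 2 * 8 ^ d * 3 ^ n * b with hC₂def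
  have hC₂nn : 0 ≤ C₂ := by positivity
  set C₃ : ℝ := C₂ * 2 ^ ((n : ℝ) - 1 - d) with hC₃def
  have hC₃nn : 0 ≤ C₃ := by positivity
  have h2 : (0:ℝ) < 2 := two_pos
  have hpow : ∀ m : ℕ, ((1:ℝ)/2) ^ m = (2:ℝ) ^ (-(m:ℝ)) := by
    intro m
    rw [Real.rpow_neg h2.le, Real.rpow_natCast, ← inv_pow, one_div]
  have hdistmeas : Measurable fun X : EuclideanSpace ℝ (Fin n) => infDist X Γ :=
    (continuous_infDist_pt Γ).measurable
  set Z : Set (EuclideanSpace ℝ (Fin n)) := {X | infDist X Γ ≤ 0} with hZdef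
  have hZmeas : MeasurableSet Z := measurableSet_le hdistmeas measurable_const
  set S : ℕ → Set (EuclideanSpace ℝ (Fin n)) := fun k =>
    {X ∈ ball x r | r * (1/2) ^ (k+1) < infDist X Γ ∧ infDist X Γ ≤ r * (1/2) ^ k} with hSdef
  have hSmeas : ∀ k, MeasurableSet (S k) := fun k =>
    measurableSet_ball.inter
      ((measurableSet_lt measurable_const hdistmeas).inter
        (measurableSet_le hdistmeas measurable_const))
  -- covering
  have hcover : ball x r ⊆ Z ∪ ⋃ k, S k := by
    intro X hX
    rcases le_or_gt (infDist X Γ) 0 with h0 | h0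
    · exact Or.inl h0
    · right
      have hdr : infDist X Γ < r := lt_of_le_of_lt (infDist_le_dist_of_mem hx) (mem_ball.1 hX)
      have hP : ∃ k : ℕ, r * (1/2) ^ (k+1) < infDist X Γ := by
        obtain ⟨k, hk⟩ := exists_pow_lt_of_lt_one (x := infDist X Γ / r)
          (by positivity) (by norm_num : (1:ℝ)/2 < 1)
        refine ⟨k, ?_⟩
        have hk' : r * (1/2) ^ k < infDist X Γ := by
          have h' := (lt_div_iff₀ hr).1 hk
          linarith
        have hle : ((1:ℝ)/2) ^ (k+1) ≤ (1/2) ^ k := by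
          rw [pow_succ]
          nlinarith [pow_pos (by norm_num : (0:ℝ) < 1/2) k]
        nlinarith
      have hk1 : r * (1/2) ^ (Nat.find hP + 1) < infDist X Γ := Nat.find_spec hP
      have hk2 : infDist X Γ ≤ r * (1/2) ^ (Nat.find hP) := by
        rcases Nat.eq_zero_or_pos (Nat.find hP) with h | h
        · rw [h]; simpa using hdr.le
        · obtain ⟨j, hj⟩ := Nat.exists_eq_succ_of_ne_zero h.ne'
          have hmin := Nat.find_min hP (m := j) (by omega)
          rw [hj]
          exact not_lt.1 hmin
      exact mem_iUnion.2 ⟨Nat.find hP, hX, hk1, hk2⟩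
  -- integral over Z vanishes
  have hZ0 : ∫⁻ X in Z, ENNReal.ofReal (infDist X Γ ^ α) ∂volume = 0 := by
    have hle : ∫⁻ X in Z, ENNReal.ofReal (infDist X Γ ^ α) ∂volume ≤
        ∫⁻ _X in Z, 0 ∂volume := by
      refine setLIntegral_mono' hZmeas fun X hX => ?_
      have h0 : infDist X Γ = 0 := le_antisymm hX infDist_nonneg
      rw [h0, Real.zero_rpow hαneg.ne]
      simp
    simpa using hle
  -- term bounds
  have hterm : ∀ k : ℕ, ∫⁻ X in S k, ENNReal.ofReal (infDist X Γ ^ α) ∂volume ≤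
      ENNReal.ofReal (C₃ * r ^ (d+1) * (1/2) ^ k) := by
    intro k
    have hlow : (0:ℝ) < r * (1/2) ^ (k+1) := by positivity
    have hb1 : ∫⁻ X in S k, ENNReal.ofReal (infDist X Γ ^ α) ∂volume ≤
        ENNReal.ofReal ((r * (1/2) ^ (k+1)) ^ α) * volume (S k) := by
      calc ∫⁻ X in S k, ENNReal.ofReal (infDist X Γ ^ α) ∂volume
          ≤ ∫⁻ _X in S k, ENNReal.ofReal ((r * (1/2) ^ (k+1)) ^ α) ∂volume := by
            refine setLIntegral_mono' (hSmeas k) fun X hX => ?_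
            exact ENNReal.ofReal_le_ofReal
              (Real.rpow_le_rpow_of_nonpos hlow hX.2.1.le hαneg.le)
        _ = _ := setLIntegral_const _ _
    have hvol : volume (S k) ≤
        ENNReal.ofReal (C₂ * (r ^ d * (r * (1/2) ^ k) ^ ((n:ℝ) - d))) := by
      have hsub : S k ⊆ {X ∈ ball x r | infDist X Γ ≤ r * (1/2) ^ k} :=
        fun X hX => ⟨hX.1, hX.2.2⟩
      refine (measure_mono hsub).trans ?_
      have hsk : (0:ℝ) < r * (1/2) ^ k := by positivity
      have hskr : r * (1/2) ^ k ≤ r := by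
        nth_rewrite 2 [← mul_one r]
        exact mul_le_mul_of_nonneg_left (pow_le_one₀ (by norm_num) (by norm_num)) hr.le
      exact nbhd_vol hd₀ hd hC₀ hAR hx hr hsk hskr
    refine hb1.trans ?_
    refine le_trans (mul_le_mul_right hvol _) ?_
    rw [← ENNReal.ofReal_mul (by positivity)]
    apply ENNReal.ofReal_le_ofReal
    apply le_of_eq
    -- real algebra
    have e1 : r ^ (d+1) = r ^ α * (r ^ d * r ^ ((n:ℝ)-d)) := by
      rw [← Real.rpow_add hr, ← Real.rpow_add hr]
      congr 1
      rw [hαdef]; ring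
    have e2 : (2:ℝ) ^ ((n:ℝ)-1-d) * 2 ^ (-(k:ℝ)) =
        2 ^ ((-((k:ℝ)+1)) * α) * 2 ^ ((-(k:ℝ)) * ((n:ℝ)-d)) := by
      rw [← Real.rpow_add h2, ← Real.rpow_add h2]
      congr 1
      rw [hαdef]; ring
    have hc1 : ((k+1 : ℕ) : ℝ) = (k:ℝ) + 1 := by push_cast; ring
    rw [hpow (k+1), hpow k, hc1]
    rw [Real.mul_rpow hr.le (Real.rpow_nonneg h2.le _),
        Real.mul_rpow hr.le (Real.rpow_nonneg h2.le _),
        ← Real.rpow_mul h2.le, ← Real.rpow_mul h2.le]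
    rw [hC₃def, e1]
    linear_combination (-(C₂ * r ^ α * r ^ d * r ^ ((n:ℝ) - d))) * e2
  -- assemble
  calc ∫⁻ X in ball x r, ENNReal.ofReal (infDist X Γ ^ α) ∂volume
      ≤ ∫⁻ X in Z ∪ ⋃ k, S k, ENNReal.ofReal (infDist X Γ ^ α) ∂volume :=
        lintegral_mono_set hcover
    _ ≤ (∫⁻ X in Z, ENNReal.ofReal (infDist X Γ ^ α) ∂volume) +
        ∫⁻ X in ⋃ k, S k, ENNReal.ofReal (infDist X Γ ^ α) ∂volume :=
        lintegral_union_le _ _ _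
    _ ≤ 0 + ∑' k, ∫⁻ X in S k, ENNReal.ofReal (infDist X Γ ^ α) ∂volume := by
        rw [hZ0]
        exact add_le_add le_rfl (lintegral_iUnion_le _ _)
    _ ≤ ∑' k, ENNReal.ofReal (C₃ * r ^ (d+1) * (1/2) ^ k) := by
        rw [zero_add]
        exact ENNReal.tsum_le_tsum hterm
    _ = ENNReal.ofReal (∑' k : ℕ, C₃ * r ^ (d+1) * (1/2) ^ k) :=
        (ENNReal.ofReal_tsum_of_nonneg (fun k => by positivity)
          (summable_geometric_two.mul_left _)).symm
    _ = ENNReal.ofReal ((2 * C₃) * r ^ (d+1)) := by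
        rw [tsum_mul_left, tsum_geometric_two]
        congr 1
        ring

lemma m_lower {n : ℕ} {d C₀ : ℝ} (hd₀ : 0 ≤ d) (hd : d < (n : ℝ) - 1) (hC₀ : 0 < C₀)
    {Γ : Set (EuclideanSpace ℝ (Fin n))}
    (hAR : ∀ x ∈ Γ, ∀ r : ℝ, 0 < r →
      ENNReal.ofReal (C₀⁻¹ * r ^ d) ≤ μH[d] (Γ ∩ ball x r) ∧
      μH[d] (Γ ∩ ball x r) ≤ ENNReal.ofReal (C₀ * r ^ d))
    {x : EuclideanSpace ℝ (Fin n)} (hx : x ∈ Γ) {r : ℝ} (hr : 0 < r) :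
    ENNReal.ofReal (((volume (ball (0 : EuclideanSpace ℝ (Fin n)) 1)).toReal / 2) *
        r ^ (d + 1)) ≤
      ∫⁻ X in ball x r, ENNReal.ofReal (infDist X Γ ^ (d + 1 - (n : ℝ))) ∂volume := by
  classical
  have hnpos : 0 < n := by
    by_contra h
    push_neg at h
    interval_cases n
    · simp at hd; linarith
  haveI : Nontrivial (EuclideanSpace ℝ (Fin n)) := by
    apply Module.nontrivial_of_finrank_pos (R := ℝ)
    rw [finrank_euclideanSpace_fin]
    exact hnpos
  set b : ℝ := (volume (ball (0 : EuclideanSpace ℝ (Fin n)) 1)).toReal with hbdef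
  have hbpos : 0 < b := by
    rw [hbdef]
    exact ENNReal.toReal_pos (measure_ball_pos volume _ one_pos).ne' measure_ball_lt_top.ne
  set α : ℝ := d + 1 - (n : ℝ) with hαdef
  have hαneg : α < 0 := by rw [hαdef]; linarith
  set C₂ : ℝ := C₀ ^ 2 * 8 ^ d * 3 ^ n * b with hC₂def
  have hC₂pos : 0 < C₂ := by positivity
  have hnd : (0:ℝ) < (n:ℝ) - d := by linarith
  set ε : ℝ := min 1 ((b / (2 * C₂)) ^ ((n:ℝ) - d)⁻¹) with hεdef
  have hεpos : 0 < ε := lt_min one_pos (Real.rpow_pos_of_pos (by positivity) _)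
  have hεle1 : ε ≤ 1 := min_le_left _ _
  have hεbd : C₂ * ε ^ ((n:ℝ) - d) ≤ b / 2 := by
    have h1 : ε ^ ((n:ℝ) - d) ≤ ((b / (2 * C₂)) ^ ((n:ℝ) - d)⁻¹) ^ ((n:ℝ) - d) :=
      Real.rpow_le_rpow hεpos.le (min_le_right _ _) hnd.le
    rw [Real.rpow_inv_rpow (by positivity) hnd.ne'] at h1
    calc C₂ * ε ^ ((n:ℝ) - d) ≤ C₂ * (b / (2 * C₂)) :=
          mul_le_mul_of_nonneg_left h1 hC₂pos.le
      _ = b / 2 := by field_simp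
  set A : Set (EuclideanSpace ℝ (Fin n)) := {X ∈ ball x r | infDist X Γ ≤ ε * r} with hAdef
  set G : Set (EuclideanSpace ℝ (Fin n)) := {X ∈ ball x r | ε * r < infDist X Γ} with hGdef
  have hGmeas : MeasurableSet G := by
    have hdistmeas : Measurable fun X : EuclideanSpace ℝ (Fin n) => infDist X Γ :=
      (continuous_infDist_pt Γ).measurable
    exact measurableSet_ball.inter (measurableSet_lt measurable_const hdistmeas)
  -- volume of A is at most half the ball
  have hA' : volume A ≤ ENNReal.ofReal ((b / 2) * r ^ ((n:ℝ))) := by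
    have h1 := nbhd_vol hd₀ hd hC₀ hAR hx hr (s := ε * r) (by positivity)
      (by nlinarith)
    refine h1.trans (ENNReal.ofReal_le_ofReal ?_)
    have heq : r ^ d * (ε * r) ^ ((n:ℝ) - d) = ε ^ ((n:ℝ) - d) * r ^ ((n:ℝ)) := by
      rw [Real.mul_rpow hεpos.le hr.le, ← mul_assoc, mul_comm (r ^ d), mul_assoc,
        ← Real.rpow_add hr]
      congr 1
      ring
    rw [heq, ← mul_assoc]
    exact mul_le_mul_of_nonneg_right hεbd (Real.rpow_nonneg hr.le _)
  have hball : volume (ball x r) = ENNReal.ofReal (b * r ^ ((n:ℝ))) := by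
    rw [Measure.addHaar_ball volume x hr.le, finrank_euclideanSpace_fin,
      ← ENNReal.ofReal_toReal
        (measure_ball_lt_top (x := (0:EuclideanSpace ℝ (Fin n))) (r := (1:ℝ))).ne,
      ← ENNReal.ofReal_mul (by positivity), hbdef]
    congr 1
    rw [← Real.rpow_natCast r n]
    ring
  have hsplit : ball x r ⊆ A ∪ G := by
    intro X hX
    rcases le_or_gt (infDist X Γ) (ε * r) with h | h
    · exact Or.inl ⟨hX, h⟩
    · exact Or.inr ⟨hX, h⟩
  have hG : ENNReal.ofReal ((b / 2) * r ^ ((n:ℝ))) ≤ volume G := by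
    have h1 : volume (ball x r) ≤ volume A + volume G :=
      (measure_mono hsplit).trans (measure_union_le _ _)
    rw [hball] at h1
    have h2 : ENNReal.ofReal (b * r ^ ((n:ℝ))) ≤
        ENNReal.ofReal ((b / 2) * r ^ ((n:ℝ))) + volume G :=
      h1.trans (add_le_add_left hA' _)
    calc ENNReal.ofReal ((b / 2) * r ^ ((n:ℝ)))
        = ENNReal.ofReal (b * r ^ ((n:ℝ))) - ENNReal.ofReal ((b / 2) * r ^ ((n:ℝ))) := by
          rw [← ENNReal.ofReal_sub _ (by positivity)]
          congr 1
          ring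
      _ ≤ volume G := tsub_le_iff_left.2 h2
  -- lower bound for the integral
  have hint : ENNReal.ofReal (r ^ α) * volume G ≤
      ∫⁻ X in ball x r, ENNReal.ofReal (infDist X Γ ^ α) ∂volume := by
    have h1 : ∫⁻ _X in G, ENNReal.ofReal (r ^ α) ∂volume ≤
        ∫⁻ X in G, ENNReal.ofReal (infDist X Γ ^ α) ∂volume := by
      refine setLIntegral_mono' hGmeas fun X hX => ?_
      apply ENNReal.ofReal_le_ofReal
      have hpos : 0 < infDist X Γ := lt_trans (by positivity) hX.2
      have hle : infDist X Γ ≤ r :=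
        le_trans (infDist_le_dist_of_mem hx) (mem_ball.1 hX.1).le
      exact Real.rpow_le_rpow_of_nonpos hpos hle hαneg.le
    rw [setLIntegral_const] at h1
    exact h1.trans (lintegral_mono_set (fun X hX => hX.1))
  calc ENNReal.ofReal ((b / 2) * r ^ (d + 1))
      = ENNReal.ofReal (r ^ α) * ENNReal.ofReal ((b / 2) * r ^ ((n:ℝ))) := by
        rw [← ENNReal.ofReal_mul (Real.rpow_nonneg hr.le _)]
        congr 1
        rw [← mul_assoc, mul_comm (r ^ α), mul_assoc, ← Real.rpow_add hr]
        congr 2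
        rw [hαdef]; ring
    _ ≤ ENNReal.ofReal (r ^ α) * volume G := mul_le_mul_right hG _
    _ ≤ _ := hint


/-- With Γ an unbounded d-AR set, d < n-1, and
m(E) = ∫_E dist(X,Γ)^{d+1-n} dX, one has C⁻¹ r^{d+1} ≤ m(B(x,r)) ≤ C r^{d+1}
for x ∈ Γ and r > 0, with C depending only on C₀, n, d. -/
theorem weighted_measure_of_boundary_balls
    (n : ℕ) (d C₀ : ℝ) (hd₀ : 0 ≤ d) (hd : d < (n : ℝ) - 1) (hC₀ : 0 < C₀)
    (Γ : Set (EuclideanSpace ℝ (Fin n)))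
    (hAR : ∀ x ∈ Γ, ∀ r : ℝ, 0 < r →
      ENNReal.ofReal (C₀⁻¹ * r ^ d) ≤ μH[d] (Γ ∩ ball x r) ∧
      μH[d] (Γ ∩ ball x r) ≤ ENNReal.ofReal (C₀ * r ^ d))
    (m : Set (EuclideanSpace ℝ (Fin n)) → ℝ≥0∞)
    (hm : ∀ E : Set (EuclideanSpace ℝ (Fin n)),
      m E = ∫⁻ X in E, ENNReal.ofReal (Metric.infDist X Γ ^ (d + 1 - (n : ℝ))) ∂volume) :
    ∃ C : ℝ, 0 < C ∧
      ∀ x ∈ Γ, ∀ r : ℝ, 0 < r →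
        ENNReal.ofReal (C⁻¹ * r ^ (d + 1)) ≤ m (ball x r) ∧
        m (ball x r) ≤ ENNReal.ofReal (C * r ^ (d + 1)) := by
  classical
  have hnpos : 0 < n := by
    by_contra h
    push_neg at h
    interval_cases n
    · simp at hd; linarith
  haveI : Nontrivial (EuclideanSpace ℝ (Fin n)) := by
    apply Module.nontrivial_of_finrank_pos (R := ℝ)
    rw [finrank_euclideanSpace_fin]
    exact hnpos
  set b : ℝ := (volume (ball (0 : EuclideanSpace ℝ (Fin n)) 1)).toReal with hbdef
  have hbpos : 0 < b := by
    rw [hbdef]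
    exact ENNReal.toReal_pos (measure_ball_pos volume _ one_pos).ne' measure_ball_lt_top.ne
  have hb2 : (0:ℝ) < 2 / b := by positivity
  refine ⟨max (2 / b) (2 * (C₀ ^ 2 * 8 ^ d * 3 ^ n * b * 2 ^ ((n : ℝ) - 1 - d))),
    lt_of_lt_of_le hb2 (le_max_left _ _), ?_⟩
  intro x hx r hr
  rw [hm]
  constructor
  · refine le_trans (ENNReal.ofReal_le_ofReal ?_) (m_lower hd₀ hd hC₀ hAR hx hr)
    refine mul_le_mul_of_nonneg_right ?_ (Real.rpow_nonneg hr.le _)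
    calc (max (2 / b) (2 * (C₀ ^ 2 * 8 ^ d * 3 ^ n * b * 2 ^ ((n : ℝ) - 1 - d))))⁻¹
        ≤ (2 / b)⁻¹ := inv_anti₀ hb2 (le_max_left _ _)
      _ = b / 2 := by rw [inv_div]
  · refine le_trans (m_upper hd₀ hd hC₀ hAR hx hr) (ENNReal.ofReal_le_ofReal ?_)
    exact mul_le_mul_of_nonneg_right (le_max_right _ _) (Real.rpow_nonneg hr.le _)
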